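/- The number of 0-1 strings s_1 s_2 ... s_{n-1} of length n-1 such that for no i we have s_{2i-1} = 0 and s_{2i} = 1, and for no i we have s_{2i} = 1 and s_{2i+1} = 0, equals the Fibonacci number F_n, where F_1 = 1, F_2 = 2, F_n = F_{n-1} + F_{n-2}. -/

import Mathlib

lemma fin2_ne_one {x : Fin 2} (h : x ≠ 1) : x = 0 := by omega
lemma fin2_ne_zero {x : Fin 2} (h : x ≠ 0) : x = 1 := by omega

/-- strings with no two adjacent zeros -/
def Good (m : ℕ) : Type :=
  {t : Fin m → Fin 2 // ∀ (j : ℕ) (h : j + 1 < m),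
    ¬(t ⟨j, by omega⟩ = 0 ∧ t ⟨j + 1, h⟩ = 0)}

instance (m : ℕ) : Finite (Good m) := by unfold Good; infer_instance

/-- split off the last bit -/
def goodEquiv (m : ℕ) : Good (m + 2) ≃ Good (m + 1) ⊕ Good m where
  toFun s :=
    if h : s.1 (Fin.last (m + 1)) = 1 then
      Sum.inl ⟨fun j => s.1 j.castSucc, fun j hj => s.2 j (by omega)⟩
    else
      Sum.inr ⟨fun j => s.1 j.castSucc.castSucc, fun j hj => s.2 j (by omega)⟩
  invFun t :=
    match t with
    | Sum.inl t => ⟨fun j => if h : (j : ℕ) < m + 1 then t.1 ⟨j, h⟩ else 1,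
        by
          intro j h
          by_cases h1 : j + 1 < m + 1
          · simpa [Nat.lt_of_succ_lt h1, h1] using t.2 j h1
          · simp [h1]⟩
    | Sum.inr t => ⟨fun j => if h : (j : ℕ) < m then t.1 ⟨j, h⟩
          else if (j : ℕ) = m then 1 else 0,
        by
          intro j h
          by_cases h1 : j + 1 < m
          · simpa [Nat.lt_of_succ_lt h1, h1] using t.2 j h1
          · by_cases h2 : j + 1 = m
            · simp [h1, h2]
            · have hj : (j : ℕ) = m := by omega
              simp [hj]⟩
  left_inv s := by
    by_cases h : s.1 (Fin.last (m + 1)) = 1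
    · simp only [h, dif_pos]
      apply Subtype.ext
      funext j
      simp only
      by_cases hj : (j : ℕ) < m + 1
      · rw [dif_pos hj]
        congr 1
      · rw [dif_neg hj]
        have hjm : j = Fin.last (m + 1) := Fin.ext (by
          have := j.isLt; simp [Fin.last]; omega)
        rw [hjm, h]
    · simp only [h, dif_neg, not_false_iff]
      have hlast : s.1 (Fin.last (m + 1)) = 0 := fin2_ne_one h
      have hm : s.1 ⟨m, by omega⟩ = 1 := by
        apply fin2_ne_zero
        intro h0
        exact s.2 m (by omega) ⟨h0, by
          convert hlast using 2; rfl⟩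
      apply Subtype.ext
      funext j
      simp only
      by_cases hj : (j : ℕ) < m
      · rw [dif_pos hj]
        congr 1
      · rw [dif_neg hj]
        by_cases hj2 : (j : ℕ) = m
        · rw [if_pos hj2]
          have : s.1 j = 1 := by
            rw [show j = (⟨m, by omega⟩ : Fin (m+2)) from Fin.ext hj2]
            exact hm
          rw [this]
        · rw [if_neg hj2]
          have hjl : j = Fin.last (m + 1) := Fin.ext (by
            have := j.isLt; simp [Fin.last]; omega)
          rw [hjl, hlast]
  right_inv t := by
    match t with
    | Sum.inl u =>
      have hl : (if h : ((Fin.last (m+1) : Fin (m+2)) : ℕ) < m + 1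
          then u.1 ⟨(Fin.last (m+1) : Fin (m+2)), h⟩ else 1) = 1 := by
        rw [dif_neg]
        simp [Fin.last]
      simp only [hl, dif_pos]
      congr 1
      apply Subtype.ext
      funext j
      have hj : ((j.castSucc : Fin (m+2)) : ℕ) < m + 1 := j.2
      simp only [dif_pos hj]
      congr 1
    | Sum.inr u =>
      have hl : (if h : ((Fin.last (m+1) : Fin (m+2)) : ℕ) < m
          then u.1 ⟨(Fin.last (m+1) : Fin (m+2)), h⟩ else
            if ((Fin.last (m+1) : Fin (m+2)) : ℕ) = m then 1 else 0) = 0 := by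
        rw [dif_neg (by simp [Fin.last]), if_neg (by simp [Fin.last])]
      simp only [hl]
      rw [dif_neg (by decide)]
      congr 1
      apply Subtype.ext
      funext j
      have hj : ((j.castSucc.castSucc : Fin (m+2)) : ℕ) < m := j.2
      simp only [dif_pos hj]
      congr 1

theorem good_card (m : ℕ) : Nat.card (Good m) = Nat.fib (m + 2) := by
  induction m using Nat.twoStepInduction with
  | zero =>
      have : Nat.card (Good 0) = 1 := by
        rw [Nat.card_eq_one_iff_unique]
        constructor
        · constructor
          intro a b
          apply Subtype.ext
          funext j
          exact absurd j.2 (by omega)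
        · exact ⟨⟨fun j => 0, fun j h => by omega⟩⟩
      simpa using this
  | one =>
      have e : Good 1 ≃ (Fin 1 → Fin 2) :=
        { toFun := fun s => s.1
          invFun := fun f => ⟨f, fun j h => by omega⟩
          left_inv := fun s => rfl
          right_inv := fun f => rfl }
      rw [Nat.card_congr e]
      simp [Nat.card_eq_fintype_card]
      decide
  | more m ih1 ih2 =>
      rw [Nat.card_congr (goodEquiv m), Nat.card_sum, ih2, ih1]
      show Nat.fib (m + 3) + Nat.fib (m + 2) = Nat.fib (m + 4)
      have h1 : Nat.fib (m + 4) = Nat.fib (m + 2) + Nat.fib (m + 3) := Nat.fib_add_two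
      rw [h1, Nat.add_comm]

lemma fin2_sub {x : Fin 2} (h : x = 1) : 1 - x = 0 := by subst h; rfl
lemma fin2_sub' {x : Fin 2} (h : 1 - x = 0) : x = 1 := by omega

def flipEquiv (m : ℕ) : (Fin m → Fin 2) ≃ (Fin m → Fin 2) where
  toFun f := fun j => if (j : ℕ) % 2 = 1 then 1 - f j else f j
  invFun f := fun j => if (j : ℕ) % 2 = 1 then 1 - f j else f j
  left_inv f := by
    funext j
    by_cases h : (j : ℕ) % 2 = 1 <;> simp only [h, if_true, if_false, if_pos, if_neg] <;>
      first | omega | rfl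
  right_inv f := by
    funext j
    by_cases h : (j : ℕ) % 2 = 1 <;> simp only [h, if_true, if_false, if_pos, if_neg] <;>
      first | omega | rfl

theorem stmt_1 (n : ℕ) (hn : 1 ≤ n) :
    Nat.card {s : Fin (n - 1) → Fin 2 //
      (∀ (i : ℕ) (h : 2 * i + 1 < n - 1),
          ¬(s ⟨2 * i, by omega⟩ = 0 ∧ s ⟨2 * i + 1, h⟩ = 1)) ∧
      (∀ (i : ℕ) (h : 2 * i + 2 < n - 1),
          ¬(s ⟨2 * i + 1, by omega⟩ = 1 ∧ s ⟨2 * i + 2, h⟩ = 0))} =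
    Nat.fib (n + 1) := by
  obtain ⟨m, rfl⟩ : ∃ m, n = m + 1 := ⟨n - 1, by omega⟩
  rw [show m + 1 + 1 = m + 2 from rfl, ← good_card m]
  apply Nat.card_congr
  apply Equiv.subtypeEquiv (flipEquiv m)
  intro s
  simp only [flipEquiv, Equiv.coe_fn_mk]
  constructor
  · rintro ⟨h1, h2⟩ j hj hpair
    rcases Nat.even_or_odd j with he | ho
    · obtain ⟨i, hi⟩ := he
      have hij : j = 2 * i := by omega
      subst hij
      have e0 : (if (2 * i) % 2 = 1 then 1 - s ⟨2 * i, by omega⟩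
          else s ⟨2 * i, by omega⟩) = 0 := hpair.1
      rw [if_neg (by omega)] at e0
      have e1 : (if (2 * i + 1) % 2 = 1 then 1 - s ⟨2 * i + 1, hj⟩
          else s ⟨2 * i + 1, hj⟩) = 0 := hpair.2
      rw [if_pos (by omega)] at e1
      exact h1 i hj ⟨e0, fin2_sub' e1⟩
    · obtain ⟨i, hi⟩ := ho
      subst hi
      have e0 : (if (2 * i + 1) % 2 = 1 then 1 - s ⟨2 * i + 1, by omega⟩
          else s ⟨2 * i + 1, by omega⟩) = 0 := hpair.1
      rw [if_pos (by omega)] at e0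
      have e1 : (if (2 * i + 2) % 2 = 1 then 1 - s ⟨2 * i + 2, hj⟩
          else s ⟨2 * i + 2, hj⟩) = 0 := hpair.2
      rw [if_neg (by omega)] at e1
      exact h2 i hj ⟨fin2_sub' e0, e1⟩
  · rintro hg
    constructor
    · intro i h hpair
      refine hg (2 * i) h ⟨?_, ?_⟩
      · show (if (2 * i) % 2 = 1 then 1 - s ⟨2 * i, by omega⟩
            else s ⟨2 * i, by omega⟩) = 0
        rw [if_neg (by omega)]
        exact hpair.1
      · show (if (2 * i + 1) % 2 = 1 then 1 - s ⟨2 * i + 1, by omega⟩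
            else s ⟨2 * i + 1, by omega⟩) = 0
        rw [if_pos (by omega)]
        exact fin2_sub hpair.2
    · intro i h hpair
      refine hg (2 * i + 1) h ⟨?_, ?_⟩
      · show (if (2 * i + 1) % 2 = 1 then 1 - s ⟨2 * i + 1, by omega⟩
            else s ⟨2 * i + 1, by omega⟩) = 0
        rw [if_pos (by omega)]
        exact fin2_sub hpair.1
      · show (if (2 * i + 2) % 2 = 1 then 1 - s ⟨2 * i + 2, by omega⟩
            else s ⟨2 * i + 2, by omega⟩) = 0
        rw [if_neg (by omega)]
        exact hpair.2
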